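/- Assume the context (two periodic Zeckendorf collections with E ⊊ Ẽ, fundamental sequences H and H̃, and counting function z). For every nonzero μ ∈ Ẽ, the set {ε ∈ E : ε <_a μ} is finite and nonempty; let μ̌ be its <_a-largest element and let μ̄ be the <_a-smallest element of E with μ̌ <_a μ̄. Then z(Σ_k μ_k H̃_k) = Σ_k μ̄_k H_k. -/

import Mathlib

open Filter Topology

namespace Zeck

-- A coefficient function is `μ : ℕ → ℕ`; index `0` is unused (members vanish there).

/-- The maximal L-block `θ^n` at index `n-1`, for `L = (e 1, …, e N)`. -/
def maxBlock (N : ℕ) (e : ℕ → ℕ) (n : ℕ) : ℕ → ℕ :=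
  fun k => if 1 ≤ k ∧ k < n then e ((n - k - 1) % N + 1) else 0

/-- A proper L-block at index `n-1` with support interval `[a, n-1]`. -/
def IsProperBlock (N : ℕ) (e : ℕ → ℕ) (ζ : ℕ → ℕ) (a n : ℕ) : Prop :=
  2 ≤ n ∧ 1 ≤ a ∧ a ≤ n - 1 ∧ (∀ j, a < j → ζ j = maxBlock N e n j) ∧
    ζ a < maxBlock N e n a ∧ (∀ j, j < a → ζ j = 0)

/-- An L-block (proper or maximal), together with its support interval. -/
def IsBlock (N : ℕ) (e : ℕ → ℕ) (ζ : ℕ → ℕ) (I : Finset ℕ) : Prop :=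
  ∃ n, 2 ≤ n ∧ ((ζ = maxBlock N e n ∧ I = Finset.Icc 1 (n - 1)) ∨
    (∃ a, IsProperBlock N e ζ a n ∧ I = Finset.Icc a (n - 1)))

/-- Membership in the periodic Zeckendorf collection for positive integers determined by L:
finite sums of L-blocks with pairwise disjoint support intervals (the zero function has `l = 0`). -/
def memColl (N : ℕ) (e : ℕ → ℕ) (μ : ℕ → ℕ) : Prop :=
  ∃ (l : ℕ) (ζ : ℕ → ℕ → ℕ) (I : ℕ → Finset ℕ),
    (∀ i, i < l → IsBlock N e (ζ i) (I i)) ∧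
    (∀ i j, i < l → j < l → i ≠ j → Disjoint (I i) (I j)) ∧
    ∀ k, μ k = ∑ i ∈ Finset.range l, ζ i k

/-- The maximal L*-block `β̄^n` at index `n`. -/
def maxStarBlock (N : ℕ) (e : ℕ → ℕ) (n : ℕ) : ℕ → ℕ :=
  fun k => if n ≤ k then e ((k - n) % N + 1) else 0

/-- A proper L*-block at index `n` with support interval `[n, b]`. -/
def IsProperStarBlock (N : ℕ) (e : ℕ → ℕ) (ζ : ℕ → ℕ) (n b : ℕ) : Prop :=
  1 ≤ n ∧ n ≤ b ∧ (∀ j, j < b → ζ j = maxStarBlock N e n j) ∧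
    ζ b < maxStarBlock N e n b ∧ (∀ j, b < j → ζ j = 0)

/-- Membership in the periodic Zeckendorf collection for `(0,1)` determined by L:
nonzero finite or infinite sums of proper L*-blocks with pairwise disjoint support intervals. -/
def memStar (N : ℕ) (e : ℕ → ℕ) (ε : ℕ → ℕ) : Prop :=
  ε ≠ 0 ∧ ∃ (l : ℕ∞) (ζ : ℕ → ℕ → ℕ) (nb : ℕ → ℕ × ℕ),
    (∀ i : ℕ, (i : ℕ∞) < l → IsProperStarBlock N e (ζ i) (nb i).1 (nb i).2) ∧
    (∀ i j : ℕ, (i : ℕ∞) < l → (j : ℕ∞) < l → i ≠ j →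
      Disjoint (Finset.Icc (nb i).1 (nb i).2) (Finset.Icc (nb j).1 (nb j).2)) ∧
    ∀ k, ε k = ∑' i : ℕ, if (i : ℕ∞) < l then ζ i k else 0

/-- A decomposition `ε = ζ^1 + … + ζ^l + μ` in which the `ζ^i` are proper L*-blocks whose
support intervals partition `[1, b]` and `μ` vanishes on `[0, b]` (`l, b` possibly infinite). -/
def DecompData (N : ℕ) (e : ℕ → ℕ) (ε : ℕ → ℕ) (l : ℕ∞) (ζ : ℕ → ℕ → ℕ)
    (nb : ℕ → ℕ × ℕ) (b : ℕ∞) (μ : ℕ → ℕ) : Prop :=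
  (∀ i : ℕ, (i : ℕ∞) < l → IsProperStarBlock N e (ζ i) (nb i).1 (nb i).2) ∧
  (∀ i j : ℕ, (i : ℕ∞) < l → (j : ℕ∞) < l → i ≠ j →
    Disjoint (Set.Icc (nb i).1 (nb i).2) (Set.Icc (nb j).1 (nb j).2)) ∧
  (⋃ i ∈ {i : ℕ | (i : ℕ∞) < l}, Set.Icc (nb i).1 (nb i).2) = {k : ℕ | 1 ≤ k ∧ (k : ℕ∞) ≤ b} ∧
  (∀ k : ℕ, (k : ℕ∞) ≤ b → μ k = 0) ∧
  (∀ k, ε k = (∑' i : ℕ, if (i : ℕ∞) < l then ζ i k else 0) + μ k)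

/-- Membership in `E̅*`. -/
def memEBar (N : ℕ) (e : ℕ → ℕ) (ε : ℕ → ℕ) : Prop :=
  memStar N e ε ∨
  ∃ (l : ℕ) (ζ : ℕ → ℕ → ℕ) (nb : ℕ → ℕ × ℕ) (b : ℕ),
    DecompData N e ε (l : ℕ∞) ζ nb (b : ℕ∞) (maxStarBlock N e (b + 1))

/-- Descending lexicographic order. -/
def dLT (a b : ℕ → ℕ) : Prop := ∃ k, a k < b k ∧ ∀ j, j < k → a j = b j

def dLE (a b : ℕ → ℕ) : Prop := a = b ∨ dLT a b

/-- Ascending lexicographic order (on finitely supported functions). -/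
def aLT (a b : ℕ → ℕ) : Prop := ∃ k, a k < b k ∧ ∀ j, k < j → a j = b j

/-- The basis coefficient function `β^b`. -/
def betaUnit (b : ℕ) : ℕ → ℕ := fun k => if k = b then 1 else 0

/-- The relation `η = rev̄(ε)`. -/
def RevBar (N : ℕ) (e : ℕ → ℕ) (ε η : ℕ → ℕ) : Prop :=
  (dLE (maxStarBlock N e 1) ε ∧ η = maxStarBlock N e 1) ∨
  (dLT ε (maxStarBlock N e 1) ∧
    ((memStar N e ε ∧ η = ε) ∨
     ∃ (l : ℕ) (ζ : ℕ → ℕ → ℕ) (nb : ℕ → ℕ × ℕ) (b : ℕ) (μ : ℕ → ℕ),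
       DecompData N e ε (l : ℕ∞) ζ nb (b : ℕ∞) μ ∧
       ((dLT (maxStarBlock N e (b + 1)) μ ∧
           η = fun k => (∑ i ∈ Finset.range l, ζ i k) + betaUnit b k) ∨
        (μ = maxStarBlock N e (b + 1) ∧ η = ε))))

/-- `Σ_k ε_k w^k` as a real number. -/
noncomputable def evalReal (ε : ℕ → ℕ) (w : ℝ) : ℝ := ∑' k : ℕ, (ε k : ℝ) * w ^ k

/-- `Σ_k ε_k H_k` (finitely supported `ε`). -/
noncomputable def evalNat (ε H : ℕ → ℕ) : ℕ := ∑' k : ℕ, ε k * H k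

/-- The counting function `z`. -/
noncomputable def zfun (N : ℕ) (e : ℕ → ℕ) (Ht : ℕ → ℕ) (x : ℕ) : ℕ :=
  Set.ncard {m : ℕ | m < x ∧ ∃ ε, memColl N e ε ∧ m = evalNat ε Ht}

/-- Characteristic polynomial of `L` for positive integers. -/
noncomputable def fchar (N : ℕ) (e : ℕ → ℕ) (x : ℝ) : ℝ :=
  x ^ N - (∑ k ∈ Finset.Ico 1 N, (e k : ℝ) * x ^ (N - k)) - (1 + (e N : ℝ))

/-- Characteristic polynomial of `L` for `(0,1)`. -/
noncomputable def gchar (N : ℕ) (e : ℕ → ℕ) (x : ℝ) : ℝ :=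
  -1 + (∑ k ∈ Finset.Ico 1 N, (e k : ℝ) * x ^ k) + (1 + (e N : ℝ)) * x ^ N

end Zeck

open Zeck

namespace ZeckAux

open Zeck Finset

/-- Block function: the proper block at `n = t+1` with lowest index `a` and digit `d`. -/
def bfun (N : ℕ) (e : ℕ → ℕ) (a d t : ℕ) : ℕ → ℕ :=
  fun k => if k = a then d else if a < k ∧ k ≤ t then maxBlock N e (t+1) k else 0

/-- Inductive characterization of members of E with support in `[1, t]`. -/
inductive Rep (N : ℕ) (e : ℕ → ℕ) : ℕ → (ℕ → ℕ) → Prop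
  | zero (t : ℕ) : Rep N e t (fun _ => 0)
  | max (t : ℕ) (ht : 1 ≤ t) : Rep N e t (maxBlock N e (t+1))
  | block (t a d : ℕ) (ρ : ℕ → ℕ) (ha : 1 ≤ a) (hat : a ≤ t)
      (hd : d < maxBlock N e (t+1) a) (hρ : Rep N e (a-1) ρ) :
      Rep N e t (fun k => bfun N e a d t k + ρ k)
  | weaken (t t' : ℕ) (ε : ℕ → ℕ) (h : Rep N e t ε) (htt : t ≤ t') : Rep N e t' ε

variable {N : ℕ} {e : ℕ → ℕ}

lemma maxBlock_pos_entry (he : 1 ≤ e 1) {t : ℕ} (ht : 1 ≤ t) : maxBlock N e (t+1) t = e 1 := by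
  simp [maxBlock, ht, Nat.lt_succ_self]

lemma maxBlock_eq_zero_of_ge {n k : ℕ} (h : n ≤ k) : maxBlock N e n k = 0 := by
  simp only [maxBlock]
  rw [if_neg (by omega)]

lemma maxBlock_zero : maxBlock N e n 0 = 0 := by
  simp [maxBlock]

lemma Rep.bsupp {t : ℕ} {ε : ℕ → ℕ} (h : Rep N e t ε) : ∀ k, t < k → ε k = 0 := by
  induction h with
  | zero t => intro k _; rfl
  | max t ht => intro k hk; exact maxBlock_eq_zero_of_ge (by omega)
  | block t a d ρ ha hat hd hρ ih =>
      intro k hk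
      have h1 : bfun N e a d t k = 0 := by
        simp only [bfun]
        rw [if_neg (by omega), if_neg (by omega)]
      have h2 : ρ k = 0 := ih k (by omega)
      simp [h1, h2]
  | weaken t t' ε h htt ih => intro k hk; exact ih k (by omega)

lemma Rep.apply_zero {t : ℕ} {ε : ℕ → ℕ} (h : Rep N e t ε) : ε 0 = 0 := by
  induction h with
  | zero t => rfl
  | max t ht => exact maxBlock_zero
  | block t a d ρ ha hat hd hρ ih =>
      have h1 : bfun N e a d t 0 = 0 := by
        simp only [bfun]; rw [if_neg (by omega), if_neg (by omega)]
      simp [h1, ih]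
  | weaken t t' ε h htt ih => exact ih

end ZeckAux
namespace ZeckAux
open Zeck Finset
variable {N : ℕ} {e H : ℕ → ℕ}

/-- recurrence in Icc form -/
lemma hrec' (hHrec : ∀ n, 2 ≤ n → H n = 1 + ∑ k ∈ Finset.Ico 1 n, maxBlock N e n k * H k)
    {t : ℕ} (ht : 1 ≤ t) :
    H (t+1) = 1 + ∑ k ∈ Finset.Icc 1 t, maxBlock N e (t+1) k * H k := by
  rw [hHrec (t+1) (by omega), Finset.Ico_add_one_right_eq_Icc]

lemma Hpos (hH1 : H 1 = 1)
    (hHrec : ∀ n, 2 ≤ n → H n = 1 + ∑ k ∈ Finset.Ico 1 n, maxBlock N e n k * H k)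
    {n : ℕ} (hn : 1 ≤ n) : 1 ≤ H n := by
  rcases Nat.lt_or_ge n 2 with h | h
  · have : n = 1 := by omega
    subst this; omega
  · rw [hHrec _ h]; omega

lemma Hlt (he : 1 ≤ e 1) (hH1 : H 1 = 1)
    (hHrec : ∀ n, 2 ≤ n → H n = 1 + ∑ k ∈ Finset.Ico 1 n, maxBlock N e n k * H k)
    {n : ℕ} (hn : 1 ≤ n) : H n < H (n+1) := by
  rw [hrec' hHrec hn]
  have hmem : n ∈ Finset.Icc 1 n := by simp [hn]
  have h1 : maxBlock N e (n+1) n * H n ≤ ∑ k ∈ Finset.Icc 1 n, maxBlock N e (n+1) k * H k :=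
    Finset.single_le_sum (f := fun k => maxBlock N e (n+1) k * H k)
      (fun i _ => Nat.zero_le _) hmem
  have h2 : maxBlock N e (n+1) n = e 1 := maxBlock_pos_entry he hn
  nlinarith [Hpos hH1 hHrec hn]

lemma Hmono (he : 1 ≤ e 1) (hH1 : H 1 = 1)
    (hHrec : ∀ n, 2 ≤ n → H n = 1 + ∑ k ∈ Finset.Ico 1 n, maxBlock N e n k * H k)
    {m n : ℕ} (hm : 1 ≤ m) (hmn : m ≤ n) : H m ≤ H n := by
  induction n with
  | zero => omega
  | succ n ih =>
      rcases Nat.lt_or_ge m (n+1) with h | h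
      · exact le_trans (ih (by omega)) (le_of_lt (Hlt he hH1 hHrec (by omega)))
      · have : m = n + 1 := by omega
        subst this; rfl

lemma Hunbounded (he : 1 ≤ e 1) (hH1 : H 1 = 1)
    (hHrec : ∀ n, 2 ≤ n → H n = 1 + ∑ k ∈ Finset.Ico 1 n, maxBlock N e n k * H k)
    (m : ℕ) : m < H (m+1) := by
  induction m with
  | zero => exact Hpos hH1 hHrec (n := 1) le_rfl
  | succ m ih => have := Hlt he hH1 hHrec (n := m+1) (by omega); omega

/-- evalNat as a finite sum -/
lemma evalNat_eq_sum {ε : ℕ → ℕ} {T : ℕ} (h0 : ε 0 = 0) (hb : ∀ k, T < k → ε k = 0) :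
    evalNat ε H = ∑ k ∈ Finset.Icc 1 T, ε k * H k := by
  unfold evalNat
  apply tsum_eq_sum
  intro b hb'
  simp only [Finset.mem_Icc, not_and, not_le] at hb'
  rcases Nat.eq_zero_or_pos b with rfl | hbpos
  · simp [h0]
  · have : T < b := hb' hbpos
    simp [hb b this]

lemma evalNat_zero : evalNat (fun _ => 0) H = 0 := by
  unfold evalNat; simp

lemma evalNat_add {ε ρ : ℕ → ℕ} {T : ℕ} (h0 : ε 0 = 0) (hb : ∀ k, T < k → ε k = 0)
    (h0' : ρ 0 = 0) (hb' : ∀ k, T < k → ρ k = 0) :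
    evalNat (fun k => ε k + ρ k) H = evalNat ε H + evalNat ρ H := by
  rw [evalNat_eq_sum (ε := fun k => ε k + ρ k) (T := T) (by simp [h0, h0'])
      (fun k hk => by simp [hb k hk, hb' k hk]),
    evalNat_eq_sum h0 hb, evalNat_eq_sum h0' hb']
  rw [← Finset.sum_add_distrib]
  apply Finset.sum_congr rfl
  intro k _; ring

lemma evalNat_le_sum {ε : ℕ → ℕ} {T : ℕ} (h0 : ε 0 = 0) (hb : ∀ k, T < k → ε k = 0)
    {T' : ℕ} (hTT : T ≤ T') :
    evalNat ε H = ∑ k ∈ Finset.Icc 1 T', ε k * H k := by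
  rw [evalNat_eq_sum h0 hb]
  apply Finset.sum_subset (Finset.Icc_subset_Icc_right hTT)
  intro x hx hx'
  simp only [Finset.mem_Icc, not_and, not_le] at hx hx'
  rw [hb x (hx' hx.1)]; ring

end ZeckAux
namespace ZeckAux
open Zeck Finset
variable {N : ℕ} {e H : ℕ → ℕ}

lemma bfun_zero {a d t : ℕ} (ha : 1 ≤ a) : bfun N e a d t 0 = 0 := by
  simp only [bfun]; rw [if_neg (by omega), if_neg (by omega)]

lemma bfun_gt {a d t k : ℕ} (hk : t < k) (hat : a ≤ t) : bfun N e a d t k = 0 := by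
  simp only [bfun]; rw [if_neg (by omega), if_neg (by omega)]

lemma bfun_lt {a d t k : ℕ} (hk : k < a) : bfun N e a d t k = 0 := by
  simp only [bfun]; rw [if_neg (by omega), if_neg (by omega)]

lemma bfun_at {a d t : ℕ} : bfun N e a d t a = d := by
  simp [bfun]

lemma bfun_mid {a d t k : ℕ} (h1 : a < k) (h2 : k ≤ t) :
    bfun N e a d t k = maxBlock N e (t+1) k := by
  simp only [bfun]; rw [if_neg (by omega), if_pos ⟨h1, h2⟩]

lemma Icc_insert {a t : ℕ} (h : a ≤ t) :
    Finset.Icc a t = insert a (Finset.Icc (a+1) t) := by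
  ext x; simp only [Finset.mem_Icc, Finset.mem_insert]; omega

lemma evalNat_bfun {a d t : ℕ} (ha : 1 ≤ a) (hat : a ≤ t) :
    evalNat (bfun N e a d t) H
      = d * H a + ∑ k ∈ Finset.Icc (a+1) t, maxBlock N e (t+1) k * H k := by
  rw [evalNat_eq_sum (bfun_zero ha) (fun k hk => bfun_gt hk hat)]
  have hsub : Finset.Icc 1 t = Finset.Icc 1 (a-1) ∪ Finset.Icc a t := by
    ext x; simp only [Finset.mem_Icc, Finset.mem_union]; omega
  rw [hsub, Finset.sum_union (by
    rw [Finset.disjoint_left]; intro x hx hx'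
    simp only [Finset.mem_Icc] at hx hx'; omega)]
  have h1 : ∑ k ∈ Finset.Icc 1 (a-1), bfun N e a d t k * H k = 0 := by
    apply Finset.sum_eq_zero
    intro k hk; simp only [Finset.mem_Icc] at hk
    rw [bfun_lt (by omega)]; ring
  rw [h1, Icc_insert hat, Finset.sum_insert (by simp only [Finset.mem_Icc]; omega)]
  rw [bfun_at, Nat.zero_add]
  congr 1
  apply Finset.sum_congr rfl
  intro k hk; simp only [Finset.mem_Icc] at hk
  rw [bfun_mid hk.1 hk.2]

lemma evalNat_maxBlock {t : ℕ} :
    evalNat (maxBlock N e (t+1)) H = ∑ k ∈ Finset.Icc 1 t, maxBlock N e (t+1) k * H k :=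
  evalNat_eq_sum maxBlock_zero (fun k hk => maxBlock_eq_zero_of_ge (by omega))

/-- Fundamental bound: members supported in `[1,t]` evaluate below `H (t+1)`. -/
lemma Rep.val_lt (he : 1 ≤ e 1) (hH1 : H 1 = 1)
    (hHrec : ∀ n, 2 ≤ n → H n = 1 + ∑ k ∈ Finset.Ico 1 n, maxBlock N e n k * H k)
    {t : ℕ} {ε : ℕ → ℕ} (h : Rep N e t ε) : evalNat ε H < H (t+1) := by
  induction h with
  | zero t => rw [evalNat_zero]; exact Hpos hH1 hHrec (by omega)
  | max t ht => rw [evalNat_maxBlock, hrec' hHrec ht]; omega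
  | block t a d ρ ha hat hd hρ ih =>
      have ha' : a - 1 + 1 = a := by omega
      rw [ha'] at ih
      rw [evalNat_add (bfun_zero ha) (fun k hk => bfun_gt hk hat) hρ.apply_zero
        (fun k hk => hρ.bsupp k (by omega))]
      rw [evalNat_bfun ha hat, hrec' hHrec (by omega)]
      have key : d * H a + ∑ k ∈ Finset.Icc (a+1) t, maxBlock N e (t+1) k * H k + H a
          ≤ ∑ k ∈ Finset.Icc 1 t, maxBlock N e (t+1) k * H k := by
        have h2 : d * H a + H a ≤ maxBlock N e (t+1) a * H a := by
          have : d + 1 ≤ maxBlock N e (t+1) a := hd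
          nlinarith
        have h3 : maxBlock N e (t+1) a * H a
            + ∑ k ∈ Finset.Icc (a+1) t, maxBlock N e (t+1) k * H k
            = ∑ k ∈ Finset.Icc a t, maxBlock N e (t+1) k * H k := by
          rw [Icc_insert hat, Finset.sum_insert (by simp only [Finset.mem_Icc]; omega)]
        have h4 : ∑ k ∈ Finset.Icc a t, maxBlock N e (t+1) k * H k
            ≤ ∑ k ∈ Finset.Icc 1 t, maxBlock N e (t+1) k * H k := by
          apply Finset.sum_le_sum_of_subset
          apply Finset.Icc_subset_Icc_left; omega
        omega
      omega
  | weaken t t' ε h htt ih =>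
      exact lt_of_lt_of_le ih (Hmono he hH1 hHrec (by omega) (by omega))

end ZeckAux
namespace ZeckAux
open Zeck Finset
variable {N : ℕ} {e H : ℕ → ℕ}

/-- Normalized inversion: a nonzero member has a top block ending exactly at its top index. -/
lemma Rep.inv {t : ℕ} {ε : ℕ → ℕ} (h : Rep N e t ε) :
    ε = (fun _ => 0) ∨
    ∃ t' a d ρ, 1 ≤ a ∧ a ≤ t' ∧ t' ≤ t ∧ Rep N e (a-1) ρ ∧ Rep N e t' ε ∧
      (∀ k, ε k = bfun N e a d t' k + ρ k) ∧
      ((d < maxBlock N e (t'+1) a ∧ (a = t' → 1 ≤ d)) ∨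
        (a = 1 ∧ d = maxBlock N e (t'+1) 1 ∧ ρ = fun _ => 0)) := by
  induction h with
  | zero t => exact Or.inl rfl
  | max t ht =>
      right
      refine ⟨t, 1, maxBlock N e (t+1) 1, fun _ => 0, le_rfl, ht, le_rfl, Rep.zero 0,
        Rep.max t ht, ?_, Or.inr ⟨rfl, rfl, rfl⟩⟩
      intro k
      rcases Nat.lt_trichotomy k 1 with hk | hk | hk
      · have : k = 0 := by omega
        subst this
        rw [maxBlock_zero, bfun_zero le_rfl]; rfl
      · subst hk; rw [bfun_at]; rfl
      · rcases le_or_gt k t with h2 | h2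
        · rw [bfun_mid hk h2]; rfl
        · rw [bfun_gt h2 ht, maxBlock_eq_zero_of_ge (by omega)]; rfl
  | block t a d ρ ha hat hd hρ ih =>
      by_cases hcase : a = t ∧ d = 0
      · obtain ⟨rfl, rfl⟩ := hcase
        have hεθ : (fun k => bfun N e a 0 a k + ρ k) = ρ := by
          funext k
          rcases Nat.lt_trichotomy k a with hk | hk | hk
          · rw [bfun_lt hk]; ring
          · subst hk; rw [bfun_at]; ring
          · rw [bfun_gt hk le_rfl]; ring
        rw [hεθ]
        rcases ih with h0 | ⟨t', a', d', ρ', h1, h2, h3, h4, h5, h6, h7⟩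
        · exact Or.inl h0
        · exact Or.inr ⟨t', a', d', ρ', h1, h2, by omega, h4, h5, h6, h7⟩
      · right
        refine ⟨t, a, d, ρ, ha, hat, le_rfl, hρ, Rep.block t a d ρ ha hat hd hρ,
          fun k => rfl, Or.inl ⟨hd, ?_⟩⟩
        intro hat'
        rcases Nat.eq_zero_or_pos d with rfl | h
        · exact absurd ⟨by omega, rfl⟩ hcase
        · exact h
  | weaken t t' ε h htt ih =>
      rcases ih with h0 | ⟨t'', a, d, ρ, h1, h2, h3, h4, h5, h6, h7⟩
      · exact Or.inl h0
      · exact Or.inr ⟨t'', a, d, ρ, h1, h2, by omega, h4, h5, h6, h7⟩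

end ZeckAux
namespace ZeckAux
open Zeck Finset
variable {N : ℕ} {e H : ℕ → ℕ}

lemma term_le_evalNat {ε : ℕ → ℕ} (h0 : ε 0 = 0) {T : ℕ} (hb : ∀ k, T < k → ε k = 0)
    {k : ℕ} (h1 : 1 ≤ k) (h2 : k ≤ T) : ε k * H k ≤ evalNat ε H := by
  rw [evalNat_eq_sum h0 hb]
  exact Finset.single_le_sum (f := fun k => ε k * H k) (fun i _ => Nat.zero_le _)
    (Finset.mem_Icc.2 ⟨h1, h2⟩)

lemma sum_Icc_le_evalNat {ε : ℕ → ℕ} (h0 : ε 0 = 0) {T : ℕ} (hb : ∀ k, T < k → ε k = 0)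
    {a : ℕ} (ha : 1 ≤ a) : ∑ k ∈ Finset.Icc a T, ε k * H k ≤ evalNat ε H := by
  rw [evalNat_eq_sum h0 hb]
  exact Finset.sum_le_sum_of_subset (Finset.Icc_subset_Icc_left ha)

/-- Entry formulas from inversion data. -/
lemma entries {a d t₁ : ℕ} {ε ρ : ℕ → ℕ} (ha : 1 ≤ a) (hat : a ≤ t₁)
    (hfor : ∀ k, ε k = bfun N e a d t₁ k + ρ k) (hρb : ∀ j, a - 1 < j → ρ j = 0) :
    ε a = d ∧ (∀ j, a < j → j ≤ t₁ → ε j = maxBlock N e (t₁+1) j) ∧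
    (∀ j, j < a → ε j = ρ j) ∧ (∀ j, t₁ < j → ε j = 0) := by
  refine ⟨?_, ?_, ?_, ?_⟩
  · rw [hfor a, bfun_at, hρb a (by omega)]
    ring
  · intro j hj1 hj2; rw [hfor j, bfun_mid hj1 hj2, hρb j (by omega)]; ring
  · intro j hj; rw [hfor j, bfun_lt hj, Nat.zero_add]
  · intro j hj; rw [hfor j, bfun_gt hj hat, hρb j (by omega)]

lemma top_pos (he : 1 ≤ e 1) {a d t₁ : ℕ} {ε ρ : ℕ → ℕ} (ha : 1 ≤ a) (hat : a ≤ t₁)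
    (hfor : ∀ k, ε k = bfun N e a d t₁ k + ρ k) (hρb : ∀ j, a - 1 < j → ρ j = 0)
    (hflag : (d < maxBlock N e (t₁+1) a ∧ (a = t₁ → 1 ≤ d)) ∨
      (a = 1 ∧ d = maxBlock N e (t₁+1) 1 ∧ ρ = fun _ => 0)) :
    1 ≤ ε t₁ := by
  obtain ⟨ea, emid, elow, ehigh⟩ := entries ha hat hfor hρb
  rcases Nat.lt_or_ge a t₁ with h | h
  · rw [emid t₁ h le_rfl, maxBlock_pos_entry he (by omega)]; exact he
  · have haeq : a = t₁ := by omega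
    rw [haeq] at ea; rw [ea]
    rcases hflag with ⟨_, h2⟩ | ⟨h1, h2, _⟩
    · exact h2 haeq
    · rw [h2]
      have h4 : t₁ = 1 := by omega
      subst h4
      rw [maxBlock_pos_entry he le_rfl]
      exact he

lemma val_formula (hH1 : H 1 = 1) {a d t₁ : ℕ} {ε ρ : ℕ → ℕ} (ha : 1 ≤ a) (hat : a ≤ t₁)
    (hfor : ∀ k, ε k = bfun N e a d t₁ k + ρ k) (hρ0 : ρ 0 = 0)
    (hρb : ∀ j, a - 1 < j → ρ j = 0) :
    evalNat ε H = d * H a + ∑ k ∈ Finset.Icc (a+1) t₁, maxBlock N e (t₁+1) k * H k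
      + evalNat ρ H := by
  have hε : ε = fun k => bfun N e a d t₁ k + ρ k := funext hfor
  rw [hε, evalNat_add (bfun_zero ha) (fun k hk => bfun_gt hk hat) hρ0
    (fun k hk => hρb k (by omega)), evalNat_bfun ha hat]

/-- Strict monotonicity of evaluation. -/
lemma mono (he : 1 ≤ e 1) (hH1 : H 1 = 1)
    (hHrec : ∀ n, 2 ≤ n → H n = 1 + ∑ k ∈ Finset.Ico 1 n, maxBlock N e n k * H k) :
    ∀ t ε ε', Rep N e t ε → Rep N e t ε' → aLT ε ε' → evalNat ε H < evalNat ε' H := by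
  intro t
  induction t using Nat.strong_induction_on with
  | _ t IHt =>
  intro ε ε' hε hε' hlt
  obtain ⟨k, hk1, hk2⟩ := hlt
  rcases hε'.inv with rfl | ⟨t₁', a', d', ρ', ha', hat', ht', hρ', hRep', hfor', hflag'⟩
  · exact absurd hk1 (by simp)
  obtain ⟨e'a, e'mid, e'low, e'high⟩ := entries ha' hat' hfor' (fun j hj => hρ'.bsupp j hj)
  have top' : 1 ≤ ε' t₁' := top_pos he ha' hat' hfor' (fun j hj => hρ'.bsupp j hj) hflag'
  have hkle : k ≤ t₁' := by
    by_contra hcon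
    have := e'high k (by omega)
    omega
  have hub' : ε' t₁' * H t₁' ≤ evalNat ε' H :=
    term_le_evalNat hRep'.apply_zero (hRep'.bsupp) (by omega) le_rfl
  rcases hε.inv with rfl | ⟨t₁, a, d, ρ, ha, hat, ht, hρ, hRep, hfor, hflag⟩
  · -- ε = 0
    have h0 : evalNat (fun _ => 0) H = 0 := evalNat_zero
    have h1 : 1 ≤ H t₁' := Hpos hH1 hHrec (by omega)
    have h2 : 1 ≤ ε' t₁' * H t₁' := Nat.one_le_iff_ne_zero.2 (by positivity)
    have h3 : evalNat (fun _ => (0:ℕ)) H < evalNat ε' H := by omega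
    exact h3
  obtain ⟨ea, emid, elow, ehigh⟩ := entries ha hat hfor (fun j hj => hρ.bsupp j hj)
  have top : 1 ≤ ε t₁ := top_pos he ha hat hfor (fun j hj => hρ.bsupp j hj) hflag
  have htt : t₁ ≤ t₁' := by
    by_contra hcon
    have h1 : ε t₁ = ε' t₁ := hk2 t₁ (by omega)
    have h2 : ε' t₁ = 0 := e'high t₁ (by omega)
    omega
  rcases Nat.lt_or_ge t₁ t₁' with hcase | hcase
  · -- strictly smaller top
    calc evalNat ε H < H (t₁+1) := hRep.val_lt he hH1 hHrec
      _ ≤ H t₁' := Hmono he hH1 hHrec (by omega) (by omega)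
      _ ≤ ε' t₁' * H t₁' := Nat.le_mul_of_pos_left _ (by omega)
      _ ≤ evalNat ε' H := hub'
  · -- equal tops
    have hT : t₁ = t₁' := by omega
    subst hT
    have claim1 : k ≤ a ∨ k ≤ a' := by
      by_contra hcon
      push_neg at hcon
      have h1 : ε k = maxBlock N e (t₁+1) k := emid k (by omega) hkle
      have h2 : ε' k = maxBlock N e (t₁+1) k := e'mid k (by omega) hkle
      omega
    have hana : a' ≤ a := by
      by_contra hcon
      push_neg at hcon  -- a < a'
      rcases Nat.lt_or_ge k a' with hka' | hka'
      · -- k < a' : entries at a' agree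
        have h1 : ε a' = ε' a' := hk2 a' hka'
        have h2 : ε a' = maxBlock N e (t₁+1) a' := emid a' hcon hat'
        rcases hflag' with ⟨h3, _⟩ | ⟨h3, _, _⟩
        · omega
        · omega
      · -- a' ≤ k : forces k = a' by claim1
        have hka : k = a' := by omega
        subst hka
        have h2 : ε k = maxBlock N e (t₁+1) k := emid k (by omega) hkle
        rcases hflag' with ⟨h3, _⟩ | ⟨h3, _, _⟩
        · omega
        · omega
    -- values
    have hvρ : evalNat ρ H < H a := by
      have := hρ.val_lt he hH1 hHrec
      rwa [show a - 1 + 1 = a by omega] at this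
    have hvε : evalNat ε H = d * H a
        + ∑ j ∈ Finset.Icc (a+1) t₁, maxBlock N e (t₁+1) j * H j + evalNat ρ H :=
      val_formula hH1 ha hat hfor hρ.apply_zero (fun j hj => hρ.bsupp j hj)
    have hlow' : ∑ j ∈ Finset.Icc a t₁, ε' j * H j ≤ evalNat ε' H :=
      sum_Icc_le_evalNat hRep'.apply_zero hRep'.bsupp ha
    have hsplit : ∑ j ∈ Finset.Icc a t₁, ε' j * H j
        = ε' a * H a + ∑ j ∈ Finset.Icc (a+1) t₁, ε' j * H j := by
      rw [Icc_insert hat, Finset.sum_insert (by simp only [Finset.mem_Icc]; omega)]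
    rcases Nat.lt_or_ge a' a with hcase2 | hcase2
    · -- a' < a : forces k = a and d < θ_a
      have hka : k = a := by
        rcases Nat.lt_or_ge k a with hk' | hk'
        · exfalso
          have h1 : ε a = ε' a := hk2 a hk'
          have h2 : ε' a = maxBlock N e (t₁+1) a := e'mid a hcase2 hat
          rcases hflag with ⟨h3, _⟩ | ⟨h3, _, _⟩
          · omega
          · omega
        · omega
      subst hka
      have hda : d < maxBlock N e (t₁+1) k := by
        have h2 : ε' k = maxBlock N e (t₁+1) k := e'mid k hcase2 hat
        omega
      have hεmid : ∀ j ∈ Finset.Icc (k+1) t₁, ε' j * H j = maxBlock N e (t₁+1) j * H j := by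
        intro j hj
        simp only [Finset.mem_Icc] at hj
        rw [e'mid j (by omega) hj.2]
      rw [Finset.sum_congr rfl hεmid] at hsplit
      have h2 : ε' k = maxBlock N e (t₁+1) k := e'mid k hcase2 hat
      rw [h2] at hsplit
      have harith : d * H k + H k ≤ maxBlock N e (t₁+1) k * H k := by
        calc d * H k + H k = (d+1) * H k := by ring
          _ ≤ maxBlock N e (t₁+1) k * H k := Nat.mul_le_mul_right _ hda
      omega
    · -- a' = a
      have haa : a' = a := by omega
      subst haa
      have hka : k ≤ a' := by omega
      rcases Nat.lt_or_ge k a' with hk' | hk'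
      · -- k < a : recurse into ρ, ρ'
        have hdd : d = d' := by
          have := hk2 a' hk'
          omega
        subst hdd
        have hρlt : aLT ρ ρ' := by
          refine ⟨k, ?_, ?_⟩
          · have h1 : ε k = ρ k := elow k hk'
            have h2 : ε' k = ρ' k := e'low k hk'
            omega
          · intro j hj
            rcases Nat.lt_or_ge j a' with hj' | hj'
            · rw [← elow j hj', ← e'low j hj']
              exact hk2 j hj
            · rw [hρ.bsupp j (by omega), hρ'.bsupp j (by omega)]
        have hrec : evalNat ρ H < evalNat ρ' H :=
          IHt (a' - 1) (by omega) ρ ρ' hρ hρ' hρlt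
        have hvε' : evalNat ε' H = d * H a'
            + ∑ j ∈ Finset.Icc (a'+1) t₁, maxBlock N e (t₁+1) j * H j + evalNat ρ' H :=
          val_formula hH1 ha' hat' hfor' hρ'.apply_zero (fun j hj => hρ'.bsupp j hj)
        omega
      · -- k = a : digits differ
        have hka2 : k = a' := by omega
        subst hka2
        have hdd : d < d' := by omega
        have hεmid : ∀ j ∈ Finset.Icc (k+1) t₁, ε' j * H j = maxBlock N e (t₁+1) j * H j := by
          intro j hj
          simp only [Finset.mem_Icc] at hj
          rw [e'mid j (by omega) hj.2]
        rw [Finset.sum_congr rfl hεmid] at hsplit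
        rw [e'a] at hsplit
        have harith : d * H k + H k ≤ d' * H k := by
          calc d * H k + H k = (d+1) * H k := by ring
            _ ≤ d' * H k := Nat.mul_le_mul_right _ hdd
        omega

end ZeckAux
namespace ZeckAux
open Zeck Finset
variable {N : ℕ} {e H : ℕ → ℕ}

/-- Surjectivity of evaluation onto `[0, H (t+1))`. -/
lemma surj (he : 1 ≤ e 1) (hH1 : H 1 = 1)
    (hHrec : ∀ n, 2 ≤ n → H n = 1 + ∑ k ∈ Finset.Ico 1 n, maxBlock N e n k * H k) :
    ∀ t m, m < H (t+1) → ∃ ε, Rep N e t ε ∧ evalNat ε H = m := by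
  intro t
  induction t using Nat.strong_induction_on with
  | _ t IHt =>
  intro m hm
  rcases Nat.eq_zero_or_pos t with rfl | ht
  · rw [Nat.zero_add] at hm
    have hm0 : m = 0 := by omega
    subst hm0
    exact ⟨fun _ => 0, Rep.zero 0, evalNat_zero⟩
  set S : ℕ → ℕ := fun b => ∑ k ∈ Finset.Icc b t, maxBlock N e (t+1) k * H k with hS
  have hrec : H (t+1) = 1 + S 1 := hrec' hHrec ht
  have hmS : m ≤ S 1 := by omega
  rcases Nat.eq_or_lt_of_le hmS with heq | hlt
  · refine ⟨maxBlock N e (t+1), Rep.max t ht, ?_⟩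
    rw [evalNat_maxBlock]
    have hS1 : ∑ k ∈ Finset.Icc 1 t, maxBlock N e (t+1) k * H k = S 1 := rfl
    omega
  · have hPt : S (t+1) ≤ m := by
      have : Finset.Icc (t+1) t = ∅ := Finset.Icc_eq_empty (by omega)
      simp only [hS, this, Finset.sum_empty]
      omega
    have hex : ∃ b, S (b+1) ≤ m := ⟨t, hPt⟩
    set a := Nat.find hex with hadef
    have ha1 : S (a+1) ≤ m := Nat.find_spec hex
    have ha2 : a ≤ t := Nat.find_le hPt
    have ha0 : a ≠ 0 := by
      intro h
      rw [h, Nat.zero_add] at ha1; omega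
    have ha3 : 1 ≤ a := by omega
    have ha4 : m < S a := by
      have h1 : ¬ S (a - 1 + 1) ≤ m := Nat.find_min hex (by omega)
      rw [show a - 1 + 1 = a by omega] at h1
      omega
    have hsa : S a = maxBlock N e (t+1) a * H a + S (a+1) := by
      simp only [hS]
      rw [Icc_insert ha2, Finset.sum_insert (by simp only [Finset.mem_Icc]; omega)]
    set r := m - S (a+1) with hrdef
    have hr : r < maxBlock N e (t+1) a * H a := by omega
    set d := r / H a with hddef
    set r' := r % H a with hr'def
    have hHa : 1 ≤ H a := Hpos hH1 hHrec ha3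
    have hr' : r' < H a := Nat.mod_lt _ (by omega)
    have hdm : d * H a ≤ r := by
      rw [hddef]; exact Nat.div_mul_le_self r (H a)
    have hd : d < maxBlock N e (t+1) a := by
      by_contra hcon
      push_neg at hcon
      have : maxBlock N e (t+1) a * H a ≤ d * H a := Nat.mul_le_mul_right _ hcon
      omega
    have hr'H : r' < H (a - 1 + 1) := by
      rw [show a - 1 + 1 = a by omega]; exact hr'
    obtain ⟨ρ, hρ, hρval⟩ := IHt (a - 1) (by omega) r' hr'H
    refine ⟨fun k => bfun N e a d t k + ρ k, Rep.block t a d ρ ha3 ha2 hd hρ, ?_⟩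
    have hval : evalNat (fun k => bfun N e a d t k + ρ k) H
        = d * H a + ∑ k ∈ Finset.Icc (a+1) t, maxBlock N e (t+1) k * H k + evalNat ρ H :=
      val_formula hH1 ha3 ha2 (fun k => rfl) hρ.apply_zero (fun j hj => hρ.bsupp j hj)
    rw [hval, hρval]
    have hSa1 : ∑ k ∈ Finset.Icc (a+1) t, maxBlock N e (t+1) k * H k = S (a+1) := rfl
    rw [hSa1]
    have hdr : H a * (r / H a) + r % H a = r := Nat.div_add_mod r (H a)
    have : d * H a + r' = r := by
      rw [hddef, hr'def, Nat.mul_comm]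
      exact hdr
    omega

end ZeckAux
namespace ZeckAux
open Zeck Finset
variable {N : ℕ} {e H : ℕ → ℕ}

/-- memColl with a bound on all block intervals. -/
def memCollB (N : ℕ) (e : ℕ → ℕ) (ε : ℕ → ℕ) (T : ℕ) : Prop :=
  ∃ (l : ℕ) (ζ : ℕ → ℕ → ℕ) (I : ℕ → Finset ℕ),
    (∀ i, i < l → IsBlock N e (ζ i) (I i)) ∧
    (∀ i j, i < l → j < l → i ≠ j → Disjoint (I i) (I j)) ∧
    (∀ k, ε k = ∑ i ∈ Finset.range l, ζ i k) ∧
    (∀ i, i < l → I i ⊆ Finset.Icc 1 T)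

lemma memCollB.memColl {ε : ℕ → ℕ} {T : ℕ} (h : memCollB N e ε T) : memColl N e ε := by
  obtain ⟨l, ζ, I, h1, h2, h3, _⟩ := h
  exact ⟨l, ζ, I, h1, h2, h3⟩

lemma Rep.memCollB {t : ℕ} {ε : ℕ → ℕ} (h : Rep N e t ε) : memCollB N e ε t := by
  induction h with
  | zero t =>
      exact ⟨0, fun _ => 0, fun _ => ∅, by omega, by omega, fun k => by simp, by omega⟩
  | max t ht =>
      refine ⟨1, fun _ => maxBlock N e (t+1), fun _ => Finset.Icc 1 t, ?_, by omega,
        fun k => by rw [Finset.sum_range_one], fun i _ => le_rfl⟩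
      intro i _
      exact ⟨t+1, by omega, Or.inl ⟨rfl, by rw [Nat.add_sub_cancel]⟩⟩
  | block t a d ρ ha hat hd hρ ih =>
      obtain ⟨l, ζ, I, h1, h2, h3, h4⟩ := ih
      refine ⟨l+1, fun i => if i < l then ζ i else bfun N e a d t,
        fun i => if i < l then I i else Finset.Icc a t, ?_, ?_, ?_, ?_⟩
      · intro i hi
        rcases Nat.lt_or_ge i l with h | h
        · simpa [h] using h1 i h
        · have : ¬ i < l := by omega
          simp only [this, if_false]
          refine ⟨t+1, by omega, Or.inr ⟨a, ?_, by rw [Nat.add_sub_cancel]⟩⟩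
          refine ⟨by omega, ha, by rw [Nat.add_sub_cancel]; exact hat, ?_, ?_, ?_⟩
          · intro j hj
            rcases Nat.lt_or_ge t j with h' | h'
            · rw [bfun_gt h' hat, maxBlock_eq_zero_of_ge (by omega)]
            · exact bfun_mid hj h'
          · rw [bfun_at]; exact hd
          · intro j hj; exact bfun_lt hj
      · intro i j hi hj hij
        rcases Nat.lt_or_ge i l with h | h <;> rcases Nat.lt_or_ge j l with h' | h'
        · simpa [h, h'] using h2 i j h h' hij
        · have hj' : ¬ j < l := by omega
          simp only [h, if_true, hj', if_false]
          rw [Finset.disjoint_left]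
          intro x hx hx'
          have := h4 i h hx
          simp only [Finset.mem_Icc] at this hx'
          omega
        · have hi' : ¬ i < l := by omega
          simp only [h', if_true, hi', if_false]
          rw [Finset.disjoint_left]
          intro x hx hx'
          have := h4 j h' hx'
          simp only [Finset.mem_Icc] at this hx
          omega
        · omega
      · intro k
        rw [Finset.sum_range_succ]
        have hc : ∀ i ∈ Finset.range l,
            (if i < l then ζ i else bfun N e a d t) k = ζ i k := by
          intro i hi
          simp only [Finset.mem_range] at hi
          simp [hi]
        rw [Finset.sum_congr rfl hc]
        have : ¬ l < l := by omega
        simp only [this, if_false]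
        rw [← h3 k]
        ring
      · intro i hi
        rcases Nat.lt_or_ge i l with h | h
        · simp only [h, if_true]
          exact le_trans (h4 i h) (Finset.Icc_subset_Icc_right (by omega))
        · have : ¬ i < l := by omega
          simp only [this, if_false]
          exact Finset.Icc_subset_Icc_left ha
  | weaken t t' ε h htt ih =>
      obtain ⟨l, ζ, I, h1, h2, h3, h4⟩ := ih
      exact ⟨l, ζ, I, h1, h2, h3,
        fun i hi => le_trans (h4 i hi) (Finset.Icc_subset_Icc_right (by omega))⟩

lemma Rep.memColl {t : ℕ} {ε : ℕ → ℕ} (h : Rep N e t ε) : memColl N e ε :=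
  h.memCollB.memColl

end ZeckAux
namespace ZeckAux
open Zeck Finset
variable {N : ℕ} {e H : ℕ → ℕ}

lemma sum_remove {β : Type*} [AddCommMonoid β] (f : ℕ → β) {l i₀ : ℕ} (h : i₀ < l) :
    ∑ i ∈ Finset.range l, f i
      = f i₀ + ∑ i ∈ Finset.range (l-1), f (if i < i₀ then i else i + 1) := by
  rw [← Finset.add_sum_erase _ f (Finset.mem_range.2 h)]
  congr 1
  apply Finset.sum_bij' (fun (b : ℕ) (_ : b ∈ (Finset.range l).erase i₀) =>
      if b < i₀ then b else b - 1)
    (fun (a : ℕ) (_ : a ∈ Finset.range (l-1)) => if a < i₀ then a else a + 1)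
  · intro a ha
    simp only [Finset.mem_erase, Finset.mem_range] at ha ⊢
    split_ifs <;> omega
  · intro a ha
    simp only [Finset.mem_erase, Finset.mem_range] at ha ⊢
    constructor
    · split_ifs <;> omega
    · split_ifs <;> omega
  · intro a ha
    simp only [Finset.mem_erase, Finset.mem_range] at ha
    split_ifs <;> omega
  · intro a ha
    simp only [Finset.mem_range] at ha
    split_ifs <;> omega
  · intro a ha
    simp only [Finset.mem_erase, Finset.mem_range] at ha
    congr 1
    split_ifs <;> omega

lemma block_supp {ζ : ℕ → ℕ} {I : Finset ℕ} (hb : IsBlock N e ζ I) :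
    ∀ k, k ∉ I → ζ k = 0 := by
  obtain ⟨n, hn, hb⟩ := hb
  rcases hb with ⟨rfl, rfl⟩ | ⟨a, hp, rfl⟩
  · intro k hk
    simp only [Finset.mem_Icc, not_and, not_le] at hk
    rcases Nat.eq_zero_or_pos k with rfl | hkpos
    · exact maxBlock_zero
    · exact maxBlock_eq_zero_of_ge (by omega)
  · obtain ⟨hn2, ha1, han, hmid, hat, hlow⟩ := hp
    intro k hk
    simp only [Finset.mem_Icc, not_and, not_le] at hk
    rcases Nat.lt_or_ge k a with h | h
    · exact hlow k h
    · rw [hmid k (by omega)]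
      exact maxBlock_eq_zero_of_ge (by omega)

lemma sup_Icc_id {a b : ℕ} (h : a ≤ b) : (Finset.Icc a b).sup id = b := by
  apply le_antisymm
  · apply Finset.sup_le
    intro x hx
    simp only [Finset.mem_Icc] at hx
    exact hx.2
  · exact Finset.le_sup (f := id) (Finset.mem_Icc.2 ⟨h, le_rfl⟩)

/-- Extraction: members of the collection supported in `[1,T]` satisfy `Rep`. -/
lemma memColl_to_Rep (he : 1 ≤ e 1) :
    ∀ l (ζ : ℕ → ℕ → ℕ) (I : ℕ → Finset ℕ) (ε : ℕ → ℕ) (T : ℕ),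
      (∀ i, i < l → IsBlock N e (ζ i) (I i)) →
      (∀ i j, i < l → j < l → i ≠ j → Disjoint (I i) (I j)) →
      (∀ k, ε k = ∑ i ∈ Finset.range l, ζ i k) →
      (∀ k, T < k → ε k = 0) → Rep N e T ε := by
  intro l
  induction l using Nat.strong_induction_on with
  | _ l IHl =>
  intro ζ I ε T hblocks hdisj hsum hT
  rcases Nat.eq_zero_or_pos l with rfl | hl
  · have hε : ε = fun _ => 0 := by
      funext k; simpa using hsum k
    rw [hε]; exact Rep.zero T
  by_cases hz : ∃ i₀, i₀ < l ∧ ∀ k, ζ i₀ k = 0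
  · -- remove a zero block
    obtain ⟨i₀, hi₀, hzero⟩ := hz
    apply IHl (l-1) (by omega) (fun i => ζ (if i < i₀ then i else i + 1))
      (fun i => I (if i < i₀ then i else i + 1)) ε T
    · intro i hi
      apply hblocks
      split_ifs <;> omega
    · intro i j hi hj hij
      apply hdisj <;> split_ifs <;> omega
    · intro k
      rw [hsum k, sum_remove (fun i => ζ i k) hi₀, hzero k, Nat.zero_add]
    · exact hT
  · -- all blocks nonzero: pick the top one
    push_neg at hz
    obtain ⟨i₀, hi₀mem, hi₀max⟩ := Finset.exists_max_image (Finset.range l)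
      (fun i => (I i).sup id) ⟨0, Finset.mem_range.2 hl⟩
    rw [Finset.mem_range] at hi₀mem
    obtain ⟨kz, hkz⟩ := hz i₀ hi₀mem
    -- common data about the chosen block
    obtain ⟨n, hn2, hbc⟩ := hblocks i₀ hi₀mem
    -- define the low part
    set ρ : ℕ → ℕ := fun k => ∑ i ∈ Finset.range (l-1), ζ (if i < i₀ then i else i + 1) k
      with hρdef
    have hεsum : ∀ k, ε k = ζ i₀ k + ρ k := by
      intro k
      rw [hsum k, sum_remove (fun i => ζ i k) hi₀mem]
    -- a = bottom of top interval, tI = top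
    have main : ∀ a tI : ℕ, I i₀ = Finset.Icc a tI → 1 ≤ a → a ≤ tI → 1 ≤ ζ i₀ tI →
        (Rep N e (a-1) ρ ∧ tI ≤ T ∧ ∀ k, a - 1 < k → ρ k = 0) := by
      intro a tI hIeq ha hatI htop
      have hρb : ∀ k, a - 1 < k → ρ k = 0 := by
        intro k hk
        apply Finset.sum_eq_zero
        intro i hi
        rw [Finset.mem_range] at hi
        set i' := if i < i₀ then i else i + 1 with hi'
        have hi'l : i' < l := by rw [hi']; split_ifs <;> omega
        have hi'ne : i' ≠ i₀ := by rw [hi']; split_ifs <;> omega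
        apply block_supp (hblocks i' hi'l)
        intro hkmem
        have h1 : k ≤ (I i').sup id := Finset.le_sup (f := id) hkmem
        have h2 : (I i').sup id ≤ (I i₀).sup id := hi₀max i' (Finset.mem_range.2 hi'l)
        have h3 : (I i₀).sup id = tI := by rw [hIeq]; exact sup_Icc_id hatI
        have h4 : k ∉ I i₀ := Finset.disjoint_left.1
          (hdisj i' i₀ hi'l hi₀mem hi'ne) hkmem
        rw [hIeq, Finset.mem_Icc] at h4
        omega
      have hrep : Rep N e (a-1) ρ := by
        apply IHl (l-1) (by omega) (fun i => ζ (if i < i₀ then i else i + 1))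
          (fun i => I (if i < i₀ then i else i + 1)) ρ (a-1)
        · intro i hi; apply hblocks; split_ifs <;> omega
        · intro i j hi hj hij; apply hdisj <;> split_ifs <;> omega
        · intro k; rfl
        · exact hρb
      have htT : tI ≤ T := by
        by_contra hcon
        have h1 : ε tI = 0 := hT tI (by omega)
        have h2 : ε tI = ζ i₀ tI + ρ tI := hεsum tI
        omega
      exact ⟨hrep, htT, hρb⟩
    have hblock0 : ∀ i, i < l → ζ i 0 = 0 := by
      intro i hi
      obtain ⟨n', hn2', hbc'⟩ := hblocks i hi
      rcases hbc' with ⟨hζ', _⟩ | ⟨a', hp', _⟩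
      · rw [hζ']; exact maxBlock_zero
      · exact hp'.2.2.2.2.2 0 (by have := hp'.2.1; omega)
    rcases hbc with ⟨hζeq, hIeq⟩ | ⟨a, hp, hIeq⟩
    · -- maximal block
      have htop : 1 ≤ ζ i₀ (n-1) := by
        rw [hζeq]
        have h5 : maxBlock N e ((n-1)+1) (n-1) = e 1 := maxBlock_pos_entry he (by omega)
        rw [show (n-1)+1 = n by omega] at h5
        rw [h5]; exact he
      obtain ⟨hrep, htT, hρb⟩ := main 1 (n-1) hIeq le_rfl (by omega) htop
      have hρ0 : ∀ k, ρ k = 0 := by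
        intro k
        rcases Nat.eq_zero_or_pos k with rfl | hk
        · apply Finset.sum_eq_zero
          intro i hi
          rw [Finset.mem_range] at hi
          apply hblock0
          split_ifs <;> omega
        · exact hρb k (by omega)
      have hεeq : ε = maxBlock N e n := by
        funext k
        rw [hεsum k, hζeq, hρ0 k]
        ring
      have hrepmax : Rep N e (n-1) ε := by
        have h6 := Rep.max (N := N) (e := e) (n-1) (by omega)
        rw [show (n-1)+1 = n by omega] at h6
        rw [hεeq]
        exact h6
      exact Rep.weaken _ _ _ hrepmax htT
    · -- proper block
      obtain ⟨hn2', ha1, han, hmid, hata, hlow⟩ := hp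
      have htop : 1 ≤ ζ i₀ (n-1) := by
        rcases Nat.lt_or_ge a (n-1) with h | h
        · rw [hmid (n-1) h]
          have h5 : maxBlock N e ((n-1)+1) (n-1) = e 1 := maxBlock_pos_entry he (by omega)
          rw [show (n-1)+1 = n by omega] at h5
          rw [h5]; exact he
        · have haeq : a = n - 1 := by omega
          rcases Nat.eq_zero_or_pos (ζ i₀ (n-1)) with h0 | h1
          · exfalso
            apply hkz
            rcases Nat.lt_trichotomy kz a with hc | hc | hc
            · exact hlow kz hc
            · rw [hc, haeq]; exact h0
            · rw [hmid kz hc]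
              exact maxBlock_eq_zero_of_ge (by omega)
          · exact h1
      obtain ⟨hrep, htT, hρb⟩ := main a (n-1) hIeq ha1 han htop
      have hd : ζ i₀ a < maxBlock N e ((n-1)+1) a := by
        rw [show (n-1)+1 = n by omega]; exact hata
      have hεeq : ε = fun k => bfun N e a (ζ i₀ a) (n-1) k + ρ k := by
        funext k
        rw [hεsum k]
        congr 1
        rcases Nat.lt_trichotomy k a with hc | hc | hc
        · rw [bfun_lt hc, hlow k hc]
        · rw [hc, bfun_at]
        · rcases le_or_gt k (n-1) with h' | h'
          · rw [bfun_mid hc h', hmid k hc, show (n-1)+1 = n by omega]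
          · rw [bfun_gt h' han, hmid k hc]
            exact maxBlock_eq_zero_of_ge (by omega)
      have hrepb : Rep N e (n-1) ε := by
        rw [hεeq]
        exact Rep.block (n-1) a (ζ i₀ a) ρ ha1 han hd hrep
      exact Rep.weaken _ _ _ hrepb htT

end ZeckAux
namespace ZeckAux
open Zeck Finset
variable {N : ℕ} {e H : ℕ → ℕ}

lemma aLT_trans {a b c : ℕ → ℕ} : aLT a b → aLT b c → aLT a c := by
  rintro ⟨k1, h1, g1⟩ ⟨k2, h2, g2⟩
  rcases Nat.lt_trichotomy k1 k2 with h | h | h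
  · exact ⟨k2, by rw [g1 k2 h]; exact h2, fun j hj => by rw [g1 j (by omega), g2 j hj]⟩
  · subst h
    exact ⟨k1, by omega, fun j hj => by rw [g1 j hj, g2 j hj]⟩
  · exact ⟨k1, by rw [← g2 k1 h]; exact h1, fun j hj => by rw [g1 j hj, g2 j (by omega)]⟩

lemma aLT_irrefl (a : ℕ → ℕ) : ¬ aLT a a := by
  rintro ⟨k, h, _⟩; omega

lemma aLT_asymm {a b : ℕ → ℕ} (h : aLT a b) (h' : aLT b a) : False :=
  aLT_irrefl a (aLT_trans h h')

lemma trichot {ε ε' : ℕ → ℕ} {T : ℕ} (hb : ∀ k, T < k → ε k = 0)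
    (hb' : ∀ k, T < k → ε' k = 0) (hne : ε ≠ ε') : aLT ε ε' ∨ aLT ε' ε := by
  classical
  obtain ⟨k₀, hk₀⟩ := Function.ne_iff.1 hne
  have hk₀T : k₀ ≤ T := by
    by_contra h
    push_neg at h
    rw [hb _ h, hb' _ h] at hk₀
    exact hk₀ rfl
  set k := Nat.findGreatest (fun k => ε k ≠ ε' k) T with hk
  have hPk : ε k ≠ ε' k :=
    Nat.findGreatest_spec (P := fun k => ε k ≠ ε' k) hk₀T hk₀
  have hgt : ∀ j, k < j → ε j = ε' j := by
    intro j hj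
    rcases le_or_gt j T with h | h
    · have := Nat.findGreatest_is_greatest hj h
      exact not_ne_iff.1 this
    · rw [hb _ h, hb' _ h]
  rcases Nat.lt_or_ge (ε k) (ε' k) with h | h
  · exact Or.inl ⟨k, h, hgt⟩
  · exact Or.inr ⟨k, by omega, fun j hj => (hgt j hj).symm⟩

lemma memColl_fin (he : 1 ≤ e 1) {ε : ℕ → ℕ} (h : memColl N e ε) :
    ∃ t, Rep N e t ε := by
  obtain ⟨l, ζ, I, h1, h2, h3⟩ := h
  set T := (Finset.range l).sup (fun i => (I i).sup id) with hT
  refine ⟨T, memColl_to_Rep he l ζ I ε T h1 h2 h3 ?_⟩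
  intro k hk
  rw [h3 k]
  apply Finset.sum_eq_zero
  intro i hi
  apply block_supp (h1 i (Finset.mem_range.1 hi))
  intro hmem
  have h4 : k ≤ (I i).sup id := Finset.le_sup (f := id) hmem
  have h5 : (I i).sup id ≤ T := Finset.le_sup (f := fun i => (I i).sup id) hi
  omega

lemma mono' (he : 1 ≤ e 1) (hH1 : H 1 = 1)
    (hHrec : ∀ n, 2 ≤ n → H n = 1 + ∑ k ∈ Finset.Ico 1 n, maxBlock N e n k * H k)
    {ε ε' : ℕ → ℕ} (hε : memColl N e ε) (hε' : memColl N e ε') (hlt : aLT ε ε') :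
    evalNat ε H < evalNat ε' H := by
  obtain ⟨t, ht⟩ := memColl_fin he hε
  obtain ⟨t', ht'⟩ := memColl_fin he hε'
  exact mono he hH1 hHrec (max t t') ε ε'
    (Rep.weaken _ _ _ ht (le_max_left _ _)) (Rep.weaken _ _ _ ht' (le_max_right _ _)) hlt

lemma surj' (he : 1 ≤ e 1) (hH1 : H 1 = 1)
    (hHrec : ∀ n, 2 ≤ n → H n = 1 + ∑ k ∈ Finset.Ico 1 n, maxBlock N e n k * H k)
    (m : ℕ) : ∃ ε, memColl N e ε ∧ evalNat ε H = m := by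
  obtain ⟨ε, h1, h2⟩ := surj he hH1 hHrec m m (Hunbounded he hH1 hHrec m)
  exact ⟨ε, h1.memColl, h2⟩

lemma memColl_zero : memColl N e 0 :=
  ⟨0, fun _ _ => 0, fun _ => ∅, by omega, by omega, fun k => by simp⟩

end ZeckAux

/-- Duality formula: for nonzero `μ ∈ Ẽ`, the set `{ε ∈ E : ε <_a μ}` is finite and
nonempty; if `μ̌` is its largest element and `μ̄` the smallest element of `E` above `μ̌`,
then `z(Σ μ_k H̃_k) = Σ μ̄_k H_k`. -/
theorem duality_formula (N M : ℕ) (e et : ℕ → ℕ)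
    (hN : 2 ≤ N) (hM : 2 ≤ M) (he : 1 ≤ e 1) (het : 1 ≤ et 1)
    (hsub : {μ | memColl N e μ} ⊂ {μ | memColl M et μ})
    (H Ht : ℕ → ℕ) (hH1 : H 1 = 1)
    (hHrec : ∀ n, 2 ≤ n → H n = 1 + ∑ k ∈ Finset.Ico 1 n, maxBlock N e n k * H k)
    (hHt1 : Ht 1 = 1)
    (hHtrec : ∀ n, 2 ≤ n → Ht n = 1 + ∑ k ∈ Finset.Ico 1 n, maxBlock M et n k * Ht k)
    (μ : ℕ → ℕ) (hμ : memColl M et μ) (hμne : μ ≠ 0) :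
    {ε | memColl N e ε ∧ aLT ε μ}.Finite ∧
    {ε | memColl N e ε ∧ aLT ε μ}.Nonempty ∧
    ∀ μcheck μbar : ℕ → ℕ,
      (μcheck ∈ {ε | memColl N e ε ∧ aLT ε μ} ∧
        ∀ ε ∈ {ε | memColl N e ε ∧ aLT ε μ}, ε ≠ μcheck → aLT ε μcheck) →
      (memColl N e μbar ∧ aLT μcheck μbar ∧
        ∀ ε, memColl N e ε → aLT μcheck ε → ε ≠ μbar → aLT μbar ε) →
      zfun N e Ht (evalNat μ Ht) = evalNat μbar H := by
  classical
  obtain ⟨tμ, hμrep⟩ := ZeckAux.memColl_fin het hμ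
  have hμb : ∀ k, tμ < k → μ k = 0 := hμrep.bsupp
  set x := evalNat μ Ht with hx
  set A := {ε | memColl N e ε ∧ aLT ε μ} with hA
  have hEsub : ∀ {ε : ℕ → ℕ}, memColl N e ε → memColl M et ε := fun h => hsub.subset h
  have monoT : ∀ {ε ε' : ℕ → ℕ}, memColl M et ε → memColl M et ε' → aLT ε ε' →
      evalNat ε Ht < evalNat ε' Ht :=
    fun h h' hl => ZeckAux.mono' het hHt1 hHtrec h h' hl
  have monoE : ∀ {ε ε' : ℕ → ℕ}, memColl N e ε → memColl N e ε' → aLT ε ε' →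
      evalNat ε H < evalNat ε' H :=
    fun h h' hl => ZeckAux.mono' he hH1 hHrec h h' hl
  have trich : ∀ {ε ε' : ℕ → ℕ}, memColl M et ε → memColl M et ε' → ε ≠ ε' →
      aLT ε ε' ∨ aLT ε' ε := by
    intro ε ε' h h' hne
    obtain ⟨t1, h1⟩ := ZeckAux.memColl_fin het h
    obtain ⟨t2, h2⟩ := ZeckAux.memColl_fin het h'
    exact ZeckAux.trichot (T := max t1 t2) (fun k hk => h1.bsupp k (by omega))
      (fun k hk => h2.bsupp k (by omega)) hne
  have trichE : ∀ {ε ε' : ℕ → ℕ}, memColl N e ε → memColl N e ε' → ε ≠ ε' →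
      aLT ε ε' ∨ aLT ε' ε :=
    fun h h' hne => trich (hEsub h) (hEsub h') hne
  have hSA : {m : ℕ | m < x ∧ ∃ ε, memColl N e ε ∧ m = evalNat ε Ht}
      = (fun ε => evalNat ε Ht) '' A := by
    ext m
    simp only [Set.mem_setOf_eq, Set.mem_image, hA]
    constructor
    · rintro ⟨hmx, ε, hcoll, rfl⟩
      refine ⟨ε, ⟨hcoll, ?_⟩, rfl⟩
      have hne : ε ≠ μ := by
        rintro rfl; omega
      rcases trich (hEsub hcoll) hμ hne with h | h
      · exact h
      · exfalso
        have := monoT hμ (hEsub hcoll) h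
        omega
    · rintro ⟨ε, ⟨hcoll, hlt⟩, rfl⟩
      refine ⟨?_, ε, hcoll, rfl⟩
      have := monoT (hEsub hcoll) hμ hlt
      omega
  have hinjT : Set.InjOn (fun ε => evalNat ε Ht) A := by
    intro ε hε ε' hε' heq
    have heq' : evalNat ε Ht = evalNat ε' Ht := heq
    by_contra hne
    rcases trich (hEsub hε.1) (hEsub hε'.1) hne with h | h
    · have := monoT (hEsub hε.1) (hEsub hε'.1) h; omega
    · have := monoT (hEsub hε'.1) (hEsub hε.1) h; omega
  have hfin : A.Finite := by
    apply Set.Finite.of_finite_image _ hinjT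
    have hsubIio : (fun ε => evalNat ε Ht) '' A ⊆ Set.Iio x := by
      rw [← hSA]; intro m hm; exact hm.1
    exact Set.Finite.subset (Set.finite_Iio x) hsubIio
  have hzero : (0 : ℕ → ℕ) ∈ A := by
    refine ⟨ZeckAux.memColl_zero, ?_⟩
    obtain ⟨k₀, hk₀⟩ := Function.ne_iff.1 hμne
    have hk₀' : μ k₀ ≠ 0 := by simpa using hk₀
    have hk₀T : k₀ ≤ tμ := by
      by_contra h
      push_neg at h
      exact hk₀' (hμb k₀ h)
    set k := Nat.findGreatest (fun k => μ k ≠ 0) tμ with hk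
    have hPk : μ k ≠ 0 := Nat.findGreatest_spec (P := fun k => μ k ≠ 0) hk₀T hk₀'
    refine ⟨k, by simp only [Pi.zero_apply]; omega, ?_⟩
    intro j hj
    simp only [Pi.zero_apply]
    rcases le_or_gt j tμ with h | h
    · have := Nat.findGreatest_is_greatest (P := fun k => μ k ≠ 0) hj h
      simp only [not_ne_iff] at this
      omega
    · rw [hμb j h]
  refine ⟨hfin, ⟨0, hzero⟩, ?_⟩
  intro μcheck μbar h1 h2
  obtain ⟨hcheckA, hcheckmax⟩ := h1
  obtain ⟨hbarcoll, hbarlt, hbarmin⟩ := h2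
  have hAA' : A = {ε | memColl N e ε ∧ aLT ε μbar} := by
    ext ε
    simp only [Set.mem_setOf_eq, hA]
    constructor
    · rintro ⟨hc, hlt⟩
      refine ⟨hc, ?_⟩
      by_cases hne : ε = μcheck
      · rw [hne]; exact hbarlt
      · exact ZeckAux.aLT_trans (hcheckmax ε ⟨hc, hlt⟩ hne) hbarlt
    · rintro ⟨hc, hlt⟩
      refine ⟨hc, ?_⟩
      by_cases hne : ε = μcheck
      · rw [hne]; exact hcheckA.2
      · rcases trichE hc hcheckA.1 hne with h | h
        · exact ZeckAux.aLT_trans h hcheckA.2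
        · have hne2 : ε ≠ μbar := fun hh => ZeckAux.aLT_irrefl μbar (hh ▸ hlt)
          exact (ZeckAux.aLT_asymm hlt (hbarmin ε hc h hne2)).elim
  have hinjE : Set.InjOn (fun ε => evalNat ε H) {ε | memColl N e ε ∧ aLT ε μbar} := by
    intro ε hε ε' hε' heq
    have heq' : evalNat ε H = evalNat ε' H := heq
    by_contra hne
    rcases trichE hε.1 hε'.1 hne with h | h
    · have := monoE hε.1 hε'.1 h; omega
    · have := monoE hε'.1 hε.1 h; omega
  have hIio : (fun ε => evalNat ε H) '' {ε | memColl N e ε ∧ aLT ε μbar}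
      = Set.Iio (evalNat μbar H) := by
    ext m
    constructor
    · rintro ⟨ε, ⟨hc, hlt⟩, rfl⟩
      exact monoE hc hbarcoll hlt
    · intro hm
      have hm' : m < evalNat μbar H := hm
      obtain ⟨ε, hc, hval⟩ := ZeckAux.surj' he hH1 hHrec m
      refine ⟨ε, ⟨hc, ?_⟩, hval⟩
      have hne : ε ≠ μbar := by
        rintro rfl; omega
      rcases trichE hc hbarcoll hne with h | h
      · exact h
      · have := monoE hbarcoll hc h; omega
  have hz : zfun N e Ht (evalNat μ Ht) = A.ncard := by
    show Set.ncard {m : ℕ | m < evalNat μ Ht ∧ ∃ ε, memColl N e ε ∧ m = evalNat ε Ht}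
      = A.ncard
    rw [← hx, hSA]
    exact Set.ncard_image_of_injOn hinjT
  rw [hz, hAA']
  have h2' : {ε | memColl N e ε ∧ aLT ε μbar}.ncard = (Set.Iio (evalNat μbar H)).ncard := by
    rw [← hIio, Set.ncard_image_of_injOn hinjE]
  rw [h2']
  rw [show Set.Iio (evalNat μbar H) = ↑(Finset.Iio (evalNat μbar H)) from
    (Finset.coe_Iio _).symm, Set.ncard_coe_finset, Nat.card_Iio]
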